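/- Assume a > 0, 2 < p < 4, γ > 0, c > 0 (negative-γ case rewritten). Let u ∈ H¹(ℝ²), ‖u‖₂² = c, Q(u) = A(u) + γc²/4 − a(p−2)/p·C(u) ≤ 0, and A(u) = k₀ = (p−2)γc²/(4(4−p)). Then a ≥ K₂ γ^{(4−p)/2} c^{3−p}, where K₂ = (1/K_GN)·p/(2^{3−p}(p−2)^{p/2}(4−p)^{(4−p)/2}); with strict inequality if Q(u) < 0. -/

import Mathlib

open MeasureTheory

noncomputable section

/-- The kinetic energy `A(u) = ∫_{ℝ²} |∇u|²`. -/
def gradNormSq (u : EuclideanSpace ℝ (Fin 2) → ℝ) : ℝ :=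
  ∫ x : EuclideanSpace ℝ (Fin 2), ‖fderiv ℝ u x‖ ^ 2

/-- `C(u) = ∫_{ℝ²} |u|^p`. -/
def Cpow (p : ℝ) (u : EuclideanSpace ℝ (Fin 2) → ℝ) : ℝ :=
  ∫ x : EuclideanSpace ℝ (Fin 2), |u x| ^ p

lemma key_eq (γ p c KGN : ℝ) (hγ : 0 < γ) (hp : 2 < p) (hp4 : p < 4)
    (hc : 0 < c) (hKGN : 0 < KGN) :
    ((1 / KGN) * (p / (2 ^ (3 - p) * (p - 2) ^ (p / 2) * (4 - p) ^ ((4 - p) / 2))))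
        * γ ^ ((4 - p) / 2) * c ^ (3 - p)
    = (γ * c ^ 2 / (2 * (4 - p))) * p /
        ((p - 2) * KGN * ((p - 2) * γ * c ^ 2 / (4 * (4 - p))) ^ ((p - 2) / 2) * c) := by
  have h2 : (0:ℝ) < p - 2 := by linarith
  have h4 : (0:ℝ) < 4 - p := by linarith
  have hp0 : (0:ℝ) < p := by linarith
  have hc2 : (c ^ 2 : ℝ) ^ ((p - 2) / 2) = c ^ (p - 2) := by
    rw [← Real.rpow_natCast c 2, ← Real.rpow_mul hc.le,
      show (2:ℕ) * ((p-2)/2) = p - 2 by push_cast; ring]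
  have h44 : (4 : ℝ) ^ ((p - 2) / 2) = 2 ^ (p - 2) := by
    rw [show (4:ℝ) = (2:ℝ) ^ (2:ℝ) by norm_num [Real.rpow_natCast], ← Real.rpow_mul (by norm_num)]
    ring_nf
  have hY : ((p - 2) * γ * c ^ 2 / (4 * (4 - p))) ^ ((p - 2) / 2)
      = (p - 2) ^ ((p - 2) / 2) * γ ^ ((p - 2) / 2) * c ^ (p - 2) /
        (2 ^ (p - 2) * (4 - p) ^ ((p - 2) / 2)) := by
    rw [Real.div_rpow (by positivity) (by positivity),
        Real.mul_rpow (by positivity) (by positivity),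
        Real.mul_rpow (by positivity) (by positivity),
        Real.mul_rpow (by norm_num) (by positivity), hc2, h44]
  have hG : γ ^ ((4 - p) / 2) = γ / γ ^ ((p - 2) / 2) := by
    rw [eq_div_iff (by positivity), ← Real.rpow_add hγ,
      show (4-p)/2 + (p-2)/2 = (1:ℝ) by ring, Real.rpow_one]
  have hC3 : c ^ (3 - p) = c / c ^ (p - 2) := by
    rw [eq_div_iff (by positivity), ← Real.rpow_add hc,
      show 3 - p + (p-2) = (1:ℝ) by ring, Real.rpow_one]
  have hX2 : (2:ℝ) ^ (3 - p) = 2 / 2 ^ (p - 2) := by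
    rw [eq_div_iff (by positivity), ← Real.rpow_add (by norm_num : (0:ℝ) < 2),
      show 3 - p + (p-2) = (1:ℝ) by ring, Real.rpow_one]
  have hXp2 : (p - 2) ^ (p / 2) = (p - 2) * (p - 2) ^ ((p - 2) / 2) := by
    rw [show p/2 = 1 + (p-2)/2 by ring, Real.rpow_add h2, Real.rpow_one]
  have hX4 : (4 - p) ^ ((4 - p) / 2) = (4 - p) / (4 - p) ^ ((p - 2) / 2) := by
    rw [eq_div_iff (by positivity), ← Real.rpow_add h4,
      show (4-p)/2 + (p-2)/2 = (1:ℝ) by ring, Real.rpow_one]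
  rw [hY, hG, hC3, hX2, hXp2, hX4]
  have a1 : (0:ℝ) < γ ^ ((p - 2) / 2) := by positivity
  have a2 : (0:ℝ) < c ^ (p - 2) := by positivity
  have a3 : (0:ℝ) < (2:ℝ) ^ (p - 2) := by positivity
  have a4 : (0:ℝ) < (p - 2) ^ ((p - 2) / 2) := by positivity
  have a5 : (0:ℝ) < (4 - p) ^ ((p - 2) / 2) := by positivity
  field_simp

/-- Negative-`γ` case, `a > 0`, `2 < p < 4`: if `Q(u) ≤ 0` and `A(u) = k₀` then
`a ≥ K₂ γ^{(4−p)/2} c^{3−p}`, with strict inequality when `Q(u) < 0`. -/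
theorem a_lower_bound_of_Q_nonpos
    (γ a p c KGN : ℝ) (hγ : 0 < γ) (ha : 0 < a) (hp : 2 < p) (hp4 : p < 4)
    (hc : 0 < c) (hKGN : 0 < KGN)
    (u : EuclideanSpace ℝ (Fin 2) → ℝ)
    (hu : ∫ x : EuclideanSpace ℝ (Fin 2), (u x) ^ 2 = c)
    (hGN : Cpow p u ≤ KGN * (gradNormSq u) ^ ((p - 2) / 2) * c)
    (hQ : gradNormSq u + γ * c ^ 2 / 4 - a * (p - 2) / p * Cpow p u ≤ 0)
    (hA : gradNormSq u = (p - 2) * γ * c ^ 2 / (4 * (4 - p))) :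
    ((1 / KGN) * (p / (2 ^ (3 - p) * (p - 2) ^ (p / 2) * (4 - p) ^ ((4 - p) / 2))))
        * γ ^ ((4 - p) / 2) * c ^ (3 - p) ≤ a ∧
    (gradNormSq u + γ * c ^ 2 / 4 - a * (p - 2) / p * Cpow p u < 0 →
      ((1 / KGN) * (p / (2 ^ (3 - p) * (p - 2) ^ (p / 2) * (4 - p) ^ ((4 - p) / 2))))
        * γ ^ ((4 - p) / 2) * c ^ (3 - p) < a) := by
  have h2 : (0:ℝ) < p - 2 := by linarith
  have h4 : (0:ℝ) < 4 - p := by linarith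
  have hp0 : (0:ℝ) < p := by linarith
  set Y : ℝ := ((p - 2) * γ * c ^ 2 / (4 * (4 - p))) ^ ((p - 2) / 2) with hYdef
  have hYpos : 0 < Y := by positivity
  have hden : 0 < (p - 2) * KGN * Y * c := by positivity
  have hcoef : 0 < a * (p - 2) / p := by positivity
  have hGN' : Cpow p u ≤ KGN * Y * c := by rw [hYdef, ← hA]; exact hGN
  have hsum : gradNormSq u + γ * c ^ 2 / 4 = γ * c ^ 2 / (2 * (4 - p)) := by
    rw [hA]; field_simp; ring
  have hmul : a * (p - 2) / p * (KGN * Y * c) * p = a * ((p - 2) * KGN * Y * c) := by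
    field_simp
  have hkey := key_eq γ p c KGN hγ hp hp4 hc hKGN
  constructor
  · have h1 : γ * c ^ 2 / (2 * (4 - p)) ≤ a * (p - 2) / p * (KGN * Y * c) := by
      calc γ * c ^ 2 / (2 * (4 - p)) ≤ a * (p - 2) / p * Cpow p u := by
            rw [← hsum]; linarith
        _ ≤ a * (p - 2) / p * (KGN * Y * c) :=
            mul_le_mul_of_nonneg_left hGN' hcoef.le
    rw [hkey, div_le_iff₀ hden]
    calc γ * c ^ 2 / (2 * (4 - p)) * p
        ≤ a * (p - 2) / p * (KGN * Y * c) * p :=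
          mul_le_mul_of_nonneg_right h1 hp0.le
      _ = a * ((p - 2) * KGN * Y * c) := hmul
  · intro hQ'
    have h1 : γ * c ^ 2 / (2 * (4 - p)) < a * (p - 2) / p * (KGN * Y * c) := by
      calc γ * c ^ 2 / (2 * (4 - p)) < a * (p - 2) / p * Cpow p u := by
            rw [← hsum]; linarith
        _ ≤ a * (p - 2) / p * (KGN * Y * c) :=
            mul_le_mul_of_nonneg_left hGN' hcoef.le
    rw [hkey, div_lt_iff₀ hden]
    calc γ * c ^ 2 / (2 * (4 - p)) * p
        < a * (p - 2) / p * (KGN * Y * c) * p :=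
          mul_lt_mul_of_pos_right h1 hp0
      _ = a * ((p - 2) * KGN * Y * c) := hmul
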